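/- Let f : H → ℝ be Fréchet differentiable on a real Hilbert space H with ∇f Lipschitz continuous with constant L_f, let g : H → ℝ ∪ {+∞} be bounded below and proper, let L > L_f, and suppose f is bounded below. Define a sequence (u_k) by choosing u_{k+1} as a global minimizer of u ↦ f(u_k) + ⟨∇f(u_k), u - u_k⟩ + (L/2)‖u - u_k‖² + g(u). Then: (a) f(u_{k+1}) + g(u_{k+1}) ≤ f(u_k) + g(u_k) - ((L - L_f)/2)‖u_{k+1} - u_k‖² for all k; (b) the sequence (f(u_k) + g(u_k)) is monotonically decreasing and convergent; (c) Σ_{k=1}^∞ ‖u_{k+1} - u_k‖² < ∞, so ‖u_{k+1} - u_k‖ → 0. -/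

import Mathlib

open Filter Topology
open scoped RealInnerProductSpace NNReal

lemma descent_lemma_aux
    {H : Type*} [NormedAddCommGroup H] [InnerProductSpace ℝ H] [CompleteSpace H]
    (f : H → ℝ) (f' : H → H) (hdiff : ∀ x, HasGradientAt f (f' x) x)
    (Lf : ℝ≥0) (hlip : LipschitzWith Lf f') (x y : H) :
    f y ≤ f x + ⟪f' x, y - x⟫ + (Lf : ℝ) / 2 * ‖y - x‖ ^ 2 := by
  set d := y - x with hd
  set φ : ℝ → ℝ := fun t => f (x + t • d) - ⟪f' x, d⟫ * t - ((Lf : ℝ) / 2 * ‖d‖ ^ 2) * t ^ 2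
    with hφ
  have hc : ∀ t : ℝ, HasDerivAt (fun t : ℝ => x + t • d) d t := fun t => by
    simpa using ((hasDerivAt_id t).smul_const d).const_add x
  have hder : ∀ t : ℝ, HasDerivAt φ
      (⟪f' (x + t • d), d⟫ - ⟪f' x, d⟫ - ((Lf : ℝ) * ‖d‖ ^ 2) * t) t := by
    intro t
    have h1 : HasDerivAt (fun t : ℝ => f (x + t • d)) ⟪f' (x + t • d), d⟫ t := by
      have := ((hdiff (x + t • d)).hasFDerivAt).comp_hasDerivAt t (hc t)
      rw [Function.comp_def] at this
      exact this.congr_deriv (by simp [real_inner_comm])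
    have h2 : HasDerivAt (fun t : ℝ => ⟪f' x, d⟫ * t) ⟪f' x, d⟫ t := by
      simpa using (hasDerivAt_id t).const_mul ⟪f' x, d⟫
    have h3 : HasDerivAt (fun t : ℝ => ((Lf : ℝ) / 2 * ‖d‖ ^ 2) * t ^ 2)
        (((Lf : ℝ) * ‖d‖ ^ 2) * t) t := by
      have := (hasDerivAt_pow 2 t).const_mul ((Lf : ℝ) / 2 * ‖d‖ ^ 2)
      refine this.congr_deriv ?_
      rw [show (2:ℕ) - 1 = 1 from rfl]
      push_cast
      ring
    exact (h1.sub h2).sub h3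
  have hanti : AntitoneOn φ (Set.Icc 0 1) := by
    apply antitoneOn_of_deriv_nonpos (convex_Icc 0 1)
    · exact fun t _ => (hder t).differentiableAt.continuousAt.continuousWithinAt
    · intro t ht
      exact (hder t).differentiableAt.differentiableWithinAt
    · intro t ht
      rw [(hder t).deriv]
      rw [interior_Icc] at ht
      have h0 : 0 < t := ht.1
      have h1' : t < 1 := ht.2
      have hle : ⟪f' (x + t • d) - f' x, d⟫ ≤ (Lf : ℝ) * t * ‖d‖ ^ 2 := by
        calc ⟪f' (x + t • d) - f' x, d⟫ ≤ ‖f' (x + t • d) - f' x‖ * ‖d‖ :=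
              real_inner_le_norm _ _
          _ ≤ ((Lf : ℝ) * ‖t • d‖) * ‖d‖ := by
              have h := hlip.dist_le_mul (x + t • d) x
              simp only [dist_eq_norm, add_sub_cancel_left] at h
              exact mul_le_mul_of_nonneg_right h (norm_nonneg d)
          _ = (Lf : ℝ) * (|t| * ‖d‖) * ‖d‖ := by rw [norm_smul]; simp
          _ = (Lf : ℝ) * t * ‖d‖ ^ 2 := by rw [abs_of_pos h0]; ring
      have := sub_nonpos.mpr hle
      rw [inner_sub_left] at hle
      nlinarith [hle]
  have key := hanti (Set.left_mem_Icc.mpr zero_le_one) (Set.right_mem_Icc.mpr zero_le_one)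
    zero_le_one
  simp only [hφ] at key
  simp only [one_smul, zero_smul, add_zero, mul_one, mul_zero, sub_zero, one_pow, zero_pow] at key
  have : x + d = y := by rw [hd]; abel
  rw [this] at key
  linarith




/-- Descent properties of the proximal gradient iteration on a real Hilbert space:
if `∇f` is `L_f`-Lipschitz, `L > L_f`, `f` and `g` are bounded below, and `u_{k+1}` is a
global minimizer of `u ↦ f(u_k) + ⟨∇f(u_k), u - u_k⟩ + (L/2)‖u - u_k‖² + g(u)`, then
(a) the sufficient decrease estimate holds, (b) `f(u_k) + g(u_k)` is monotonically
decreasing and convergent, (c) `Σ‖u_{k+1} - u_k‖² < ∞` and `‖u_{k+1} - u_k‖ → 0`. -/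
theorem proximal_gradient_descent
    {H : Type*} [NormedAddCommGroup H] [InnerProductSpace ℝ H] [CompleteSpace H]
    (f : H → ℝ) (f' : H → H) (hdiff : ∀ x, HasGradientAt f (f' x) x)
    (Lf : ℝ≥0) (hlip : LipschitzWith Lf f') (L : ℝ) (hL : (Lf : ℝ) < L)
    (g : H → ℝ) (mg : ℝ) (hg : ∀ x, mg ≤ g x) (mf : ℝ) (hf : ∀ x, mf ≤ f x)
    (u : ℕ → H)
    (hiter : ∀ (k : ℕ) (v : H),
      f (u k) + ⟪f' (u k), u (k + 1) - u k⟫ + L / 2 * ‖u (k + 1) - u k‖ ^ 2 + g (u (k + 1)) ≤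
        f (u k) + ⟪f' (u k), v - u k⟫ + L / 2 * ‖v - u k‖ ^ 2 + g v) :
    (∀ k : ℕ, f (u (k + 1)) + g (u (k + 1)) ≤
        f (u k) + g (u k) - (L - Lf) / 2 * ‖u (k + 1) - u k‖ ^ 2) ∧
    (Antitone (fun k => f (u k) + g (u k)) ∧
      ∃ c : ℝ, Tendsto (fun k => f (u k) + g (u k)) atTop (𝓝 c)) ∧
    (Summable (fun k : ℕ => ‖u (k + 1) - u k‖ ^ 2) ∧
      Tendsto (fun k : ℕ => ‖u (k + 1) - u k‖) atTop (𝓝 0)) := by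

  set d : ℕ → H := fun k => u (k + 1) - u k with hd
  have hLf : (0:ℝ) < (L - Lf) / 2 := by
    linarith [hL]
  -- part (a)
  have ha : ∀ k : ℕ, f (u (k + 1)) + g (u (k + 1)) ≤
      f (u k) + g (u k) - (L - Lf) / 2 * ‖u (k + 1) - u k‖ ^ 2 := by
    intro k
    have h1 := hiter k (u k)
    simp only [sub_self, inner_zero_right, norm_zero] at h1
    have h2 := descent_lemma_aux f f' hdiff Lf hlip (u k) (u (k + 1))
    nlinarith [h1, h2]
  refine ⟨ha, ⟨?_, ?_⟩, ?_, ?_⟩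
  · -- antitone
    apply antitone_nat_of_succ_le
    intro k
    have := ha k
    nlinarith [sq_nonneg ‖u (k + 1) - u k‖]
  · -- convergent
    have hanti : Antitone (fun k => f (u k) + g (u k)) := by
      apply antitone_nat_of_succ_le
      intro k
      have := ha k
      nlinarith [sq_nonneg ‖u (k + 1) - u k‖]
    have hbdd : BddBelow (Set.range fun k => f (u k) + g (u k)) :=
      ⟨mf + mg, by rintro x ⟨k, rfl⟩; exact add_le_add (hf _) (hg _)⟩
    exact ⟨_, tendsto_atTop_ciInf hanti hbdd⟩
  · -- summable
    have hsum : Summable (fun k : ℕ => (L - Lf) / 2 * ‖u (k + 1) - u k‖ ^ 2) := by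
      apply summable_of_sum_range_le (c := f (u 0) + g (u 0) - (mf + mg))
      · intro k; positivity
      · intro n
        have htel : ∑ i ∈ Finset.range n,
            ((f (u i) + g (u i)) - (f (u (i + 1)) + g (u (i + 1)))) =
            (f (u 0) + g (u 0)) - (f (u n) + g (u n)) :=
          Finset.sum_range_sub' (fun i => f (u i) + g (u i)) n
        have hle : ∑ i ∈ Finset.range n, (L - Lf) / 2 * ‖u (i + 1) - u i‖ ^ 2 ≤
            ∑ i ∈ Finset.range n,
              ((f (u i) + g (u i)) - (f (u (i + 1)) + g (u (i + 1)))) := by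
          apply Finset.sum_le_sum
          intro i _
          have := ha i
          linarith
        have hlow : mf + mg ≤ f (u n) + g (u n) := add_le_add (hf _) (hg _)
        linarith [hle, htel.le, htel.ge]
    have : Summable (fun k : ℕ => ‖u (k + 1) - u k‖ ^ 2) := by
      have h2 := hsum.mul_left (2 / (L - Lf))
      have hne : L - Lf ≠ 0 := by linarith [hL]
      refine h2.congr fun k => ?_
      rw [← mul_assoc, div_mul_div_comm, mul_comm (2:ℝ), div_self (mul_ne_zero hne two_ne_zero), one_mul]
    exact this
  · -- tendsto
    have hsum : Summable (fun k : ℕ => (L - Lf) / 2 * ‖u (k + 1) - u k‖ ^ 2) := by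
      apply summable_of_sum_range_le (c := f (u 0) + g (u 0) - (mf + mg))
      · intro k; positivity
      · intro n
        have htel : ∑ i ∈ Finset.range n,
            ((f (u i) + g (u i)) - (f (u (i + 1)) + g (u (i + 1)))) =
            (f (u 0) + g (u 0)) - (f (u n) + g (u n)) :=
          Finset.sum_range_sub' (fun i => f (u i) + g (u i)) n
        have hle : ∑ i ∈ Finset.range n, (L - Lf) / 2 * ‖u (i + 1) - u i‖ ^ 2 ≤
            ∑ i ∈ Finset.range n,
              ((f (u i) + g (u i)) - (f (u (i + 1)) + g (u (i + 1)))) := by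
          apply Finset.sum_le_sum
          intro i _
          have := ha i
          linarith
        have hlow : mf + mg ≤ f (u n) + g (u n) := add_le_add (hf _) (hg _)
        linarith [hle, htel.le, htel.ge]
    have hsq : Summable (fun k : ℕ => ‖u (k + 1) - u k‖ ^ 2) := by
      have h2 := hsum.mul_left (2 / (L - Lf))
      have hne : L - Lf ≠ 0 := by linarith [hL]
      refine h2.congr fun k => ?_
      rw [← mul_assoc, div_mul_div_comm, mul_comm (2:ℝ), div_self (mul_ne_zero hne two_ne_zero), one_mul]
    have h0 : Tendsto (fun k : ℕ => ‖u (k + 1) - u k‖ ^ 2) atTop (𝓝 0) :=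
      hsq.tendsto_atTop_zero
    have := (Real.continuous_sqrt.tendsto 0).comp h0
    simp only [Real.sqrt_zero] at this
    convert this using 2 with k
    simp [Function.comp, Real.sqrt_sq (norm_nonneg _)]
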